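/- Let $n,m$ be natural numbers with $1 \le m \le n/3$. Then any tree $T$ on $n$ vertices contains two edge-disjoint subtrees $T_1, T_2 \subseteq T$ such that $E(T_1) \cup E(T_2) = E(T)$ and $m \le |V(T_2)| \le 3m$. -/

import Mathlib

open SimpleGraph Walk

namespace Stmt0Aux

variable {V : Type*} [DecidableEq V] {G : SimpleGraph V}

lemma takeUntil_cons' {a c b : V} (h : G.Adj a c) (q : G.Walk c b) {z : V}
    (hz : z ∈ (Walk.cons h q).support) (hza : a ≠ z) (hz' : z ∈ q.support) :
    (Walk.cons h q).takeUntil z hz = Walk.cons h (q.takeUntil z hz') := by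
  simp only [Walk.takeUntil, dif_neg hza]

lemma takeUntil_or {a b : V} (p : G.Walk a b) {u z : V}
    (hu : u ∈ p.support) (hz : z ∈ p.support) :
    u ∈ (p.takeUntil z hz).support ∨ z ∈ (p.takeUntil u hu).support := by
  induction p with
  | nil =>
    left
    rw [Walk.mem_support_nil_iff] at hu
    subst hu; exact Walk.start_mem_support _
  | cons h q ih =>
    rename_i a c b
    by_cases hua : a = u
    · subst hua; left; exact Walk.start_mem_support _
    by_cases hza : a = z
    · subst hza; right; exact Walk.start_mem_support _
    have hu' : u ∈ q.support := by
      rw [support_cons] at hu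
      rcases List.mem_cons.mp hu with h1 | h1
      · exact absurd h1.symm hua
      · exact h1
    have hz' : z ∈ q.support := by
      rw [support_cons] at hz
      rcases List.mem_cons.mp hz with h1 | h1
      · exact absurd h1.symm hza
      · exact h1
    rw [takeUntil_cons' h q hz hza hz', takeUntil_cons' h q hu hua hu']
    rcases ih hu' hz' with h1 | h1
    · left; simp [h1]
    · right; simp [h1]

lemma eq_of_mem_take_drop {a b : V} {p : G.Walk a b} (hp : p.IsPath) {z y : V}
    (hz : z ∈ p.support)
    (h1 : y ∈ (p.takeUntil z hz).support) (h2 : y ∈ (p.dropUntil z hz).support) : y = z := by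
  have hnd := hp.support_nodup
  rw [← Walk.take_spec p hz, Walk.support_append] at hnd
  have hd := Walk.support_eq_cons (p.dropUntil z hz)
  rw [hd] at h2
  rcases List.mem_cons.mp h2 with h2' | h2'
  · exact h2'
  · exact ((List.disjoint_of_nodup_append hnd) h1 h2').elim

lemma length_takeUntil_lt {a b : V} (p : G.Walk a b) {z : V} (hz : z ∈ p.support)
    (hne : z ≠ b) : (p.takeUntil z hz).length < p.length := by
  have hs := congrArg Walk.length (Walk.take_spec p hz)
  rw [Walk.length_append] at hs
  have : (p.dropUntil z hz).length ≠ 0 := fun h0 => hne (Walk.eq_of_length_eq_zero h0)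
  omega

lemma isPath_concat {a b c : V} {p : G.Walk a b} (hp : p.IsPath) (h : G.Adj b c)
    (hc : c ∉ p.support) : (p.concat h).IsPath := by
  rw [← Walk.isPath_reverse_iff, Walk.reverse_concat, Walk.cons_isPath_iff]
  refine ⟨hp.reverse, ?_⟩
  rwa [Walk.support_reverse, List.mem_reverse]


section Tree

variable (hG : G.IsTree)

/-- The unique path between two vertices of a tree. -/
noncomputable def tp (a b : V) : G.Walk a b := (hG.existsUnique_path a b).exists.choose

lemma tp_isPath (a b : V) : (tp hG a b).IsPath := (hG.existsUnique_path a b).exists.choose_spec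

lemma tp_eq {a b : V} {q : G.Walk a b} (hq : q.IsPath) : q = tp hG a b := by
  obtain ⟨p, hp, hun⟩ := hG.existsUnique_path a b
  rw [hun q hq, hun (tp hG a b) (tp_isPath hG a b)]

lemma tp_takeUntil {a b z : V} (hz : z ∈ (tp hG a b).support) :
    tp hG a z = (tp hG a b).takeUntil z hz :=
  (tp_eq hG ((tp_isPath hG a b).takeUntil hz)).symm

lemma tp_concat {x y : V} (hadj : G.Adj y x) (hy : x ∉ (tp hG r y).support) :
    tp hG r x = (tp hG r y).concat hadj :=
  (tp_eq hG (isPath_concat (tp_isPath hG r y) hadj hy)).symm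

/-- For adjacent x y, either y extends the path to x or vice versa. -/
lemma adj_cases (r : V) {x y : V} (hadj : G.Adj x y) :
    (y ∉ (tp hG r x).support ∧ tp hG r y = (tp hG r x).concat hadj) ∨
    (x ∉ (tp hG r y).support ∧ tp hG r x = (tp hG r y).concat hadj.symm) := by
  by_cases hy : y ∈ (tp hG r x).support
  · right
    have hx : x ∉ (tp hG r y).support := by
      intro hx
      rw [tp_takeUntil hG hy] at hx
      exact hadj.ne (eq_of_mem_take_drop (tp_isPath hG r x) hy hx
        (Walk.end_mem_support _))
    exact ⟨hx, tp_concat hG hadj.symm hx⟩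
  · left
    exact ⟨hy, tp_concat hG hadj hy⟩

/-- `c` is a child of `u` in the tree rooted at `r`. -/
def IsChild (r u c : V) : Prop := G.Adj u c ∧ u ∈ (tp hG r c).support

lemma IsChild.not_mem {r u c : V} (h : IsChild hG r u c) : c ∉ (tp hG r u).support := by
  intro hc
  have h2 := h.2
  rw [tp_takeUntil hG hc] at h2
  exact h.1.ne (eq_of_mem_take_drop (tp_isPath hG r u) hc h2 (Walk.end_mem_support _))

lemma IsChild.concat {r u c : V} (h : IsChild hG r u c) :
    tp hG r c = (tp hG r u).concat h.1 :=
  tp_concat hG h.1 h.not_mem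

lemma IsChild.length {r u c : V} (h : IsChild hG r u c) :
    (tp hG r c).length = (tp hG r u).length + 1 := by
  rw [h.concat, Walk.length_concat]

end Tree

section Fin

variable [Fintype V] (hG : G.IsTree)

open Classical in
/-- The set of descendants of `v` in the tree rooted at `r`. -/
noncomputable def Dfin (r v : V) : Finset V :=
  Finset.univ.filter (fun w => v ∈ (tp hG r w).support)

lemma mem_Dfin {r v w : V} : w ∈ Dfin hG r v ↔ v ∈ (tp hG r w).support := by
  simp [Dfin]

lemma self_mem_Dfin (r v : V) : v ∈ Dfin hG r v :=
  mem_Dfin hG |>.mpr (Walk.end_mem_support _)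

lemma Dfin_root (r : V) : Dfin hG r r = Finset.univ := by
  ext w; simp [mem_Dfin, Walk.start_mem_support]

lemma IsChild.Dfin_subset {r u c : V} (h : IsChild hG r u c) :
    Dfin hG r c ⊆ Dfin hG r u := by
  intro w hw
  rw [mem_Dfin] at hw ⊢
  have h2 := h.2
  rw [tp_takeUntil hG hw] at h2
  exact Walk.support_takeUntil_subset _ hw h2

lemma IsChild.not_mem_Dfin {r u c : V} (h : IsChild hG r u c) : u ∉ Dfin hG r c := by
  intro hu
  exact IsChild.not_mem hG h (mem_Dfin hG |>.mp hu)

lemma IsChild.disjoint {r u : V} {c₁ c₂ : V} (h1 : IsChild hG r u c₁)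
    (h2 : IsChild hG r u c₂) (hne : c₁ ≠ c₂) :
    Disjoint (Dfin hG r c₁) (Dfin hG r c₂) := by
  have key : ∀ {d₁ d₂ : V}, IsChild hG r u d₁ → IsChild hG r u d₂ → d₁ ≠ d₂ → ∀ {w}
      (hw2 : d₂ ∈ (tp hG r w).support),
      d₁ ∈ ((tp hG r w).takeUntil d₂ hw2).support → False := by
    intro d₁ d₂ hd1 hd2 hne w hw2 hmem
    rw [← tp_takeUntil hG, hd2.concat, Walk.support_concat] at hmem
    rcases List.mem_append.mp hmem with hm | hm
    · exact IsChild.not_mem hG hd1 hm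
    · exact hne (List.mem_singleton.mp hm)
  rw [Finset.disjoint_left]
  intro w hw1 hw2
  have hc1 := mem_Dfin hG |>.mp hw1
  have hc2 := mem_Dfin hG |>.mp hw2
  rcases takeUntil_or (tp hG r w) hc1 hc2 with hm | hm
  · exact key h1 h2 hne hc2 hm
  · exact key h2 h1 hne.symm hc1 hm

/-- Boundary edges of a descendant set: the only edge leaving `Dfin r c` is `(c, u)`. -/
lemma boundary {r u c : V} (hc : IsChild hG r u c) {x y : V}
    (hx : x ∈ Dfin hG r c) (hy : y ∉ Dfin hG r c) (hadj : G.Adj x y) :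
    x = c ∧ y = u := by
  have hcx : c ∈ (tp hG r x).support := mem_Dfin hG |>.mp hx
  rcases adj_cases hG r hadj with ⟨hns, heq⟩ | ⟨hns, heq⟩
  · exfalso
    apply hy
    rw [mem_Dfin, heq, Walk.support_concat]
    exact List.mem_append.mpr (Or.inl hcx)
  · -- tp r x = (tp r y).concat
    have hcm : c ∈ (tp hG r y).support ++ [x] := by
      rw [← Walk.support_concat (h := hadj.symm), ← heq]; exact hcx
    rcases List.mem_append.mp hcm with hm | hm
    · exact absurd (mem_Dfin hG |>.mpr hm) hy
    · have hxc : x = c := (List.mem_singleton.mp hm).symm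
      subst hxc
      refine ⟨rfl, ?_⟩
      -- both u and y are "parents" of x
      by_contra hyu
      have hlen : (tp hG r u).length = (tp hG r y).length := by
        have l1 := congrArg Walk.length hc.concat
        have l2 := congrArg Walk.length heq
        rw [Walk.length_concat] at l1 l2
        omega
      have hus : u ∈ (tp hG r x).support := hc.2
      have hys : y ∈ (tp hG r x).support := by
        rw [heq, Walk.support_concat]
        exact List.mem_append.mpr (Or.inl (Walk.end_mem_support _))
      have contra : ∀ {a b : V} (ha : a ∈ (tp hG r x).support)
          (hb : b ∈ (tp hG r x).support), a ≠ b →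
          (tp hG r a).length = (tp hG r b).length →
          a ∈ ((tp hG r x).takeUntil b hb).support → False := by
        intro a b ha hb hab hl hm
        rw [← tp_takeUntil hG hb] at hm
        have := length_takeUntil_lt (tp hG r b) hm (by
          intro h; exact hab h)
        rw [← tp_takeUntil hG hm] at this
        omega
      rcases takeUntil_or (tp hG r x) hus hys with hm | hm
      · exact (contra hus hys (fun h => hyu h.symm) hlen hm).elim
      · exact (contra hys hus hyu hlen.symm hm).elim

/-- every non-root element of `Dfin r u` lies in the descendant set of some child. -/
lemma exists_child {r u w : V} (hw : w ∈ Dfin hG r u) (hne : w ≠ u) :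
    ∃ c, IsChild hG r u c ∧ w ∈ Dfin hG r c := by
  have hu : u ∈ (tp hG r w).support := mem_Dfin hG |>.mp hw
  set q := (tp hG r w).dropUntil u hu with hq
  have hnn : ¬ q.Nil := Walk.not_nil_of_ne (Ne.symm hne)
  set c := q.getVert 1 with hcdef
  have hadj : G.Adj u c := Walk.adj_snd hnn
  have hcq : c ∈ q.support := by
    rw [← Walk.cons_support_tail hnn]
    exact List.mem_cons_of_mem _ (Walk.start_mem_support _)
  have hcw : c ∈ (tp hG r w).support := Walk.support_dropUntil_subset _ hu hcq
  refine ⟨c, ⟨hadj, ?_⟩, mem_Dfin hG |>.mpr hcw⟩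
  rcases takeUntil_or (tp hG r w) hu hcw with hm | hm
  · rwa [← tp_takeUntil hG hcw] at hm
  · exfalso
    exact hadj.ne (eq_of_mem_take_drop (tp_isPath hG r w) hu hm hcq).symm

/-- if a walk starts in `Dfin r c` and ends outside it, then `u` is on the walk. -/
lemma mem_support_of_cross {r u c : V} (hc : IsChild hG r u c) {a b : V}
    (q : G.Walk a b) (ha : a ∈ Dfin hG r c) (hb : b ∉ Dfin hG r c) : u ∈ q.support := by
  obtain ⟨d, hd, hd1, hd2⟩ := q.exists_boundary_dart (↑(Dfin hG r c) : Set V)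
    (by simpa using ha) (by simpa using hb)
  have := boundary hG hc (by simpa using hd1) (by simpa using hd2) d.adj
  rw [← this.2]
  exact Walk.dart_snd_mem_support_of_mem_darts _ hd

open Classical in
/-- The children of `u` in the tree rooted at `r`. -/
noncomputable def childFin (r u : V) : Finset V :=
  Finset.univ.filter (fun c => IsChild hG r u c)

lemma mem_childFin {r u c : V} : c ∈ childFin hG r u ↔ IsChild hG r u c := by
  simp [childFin]

lemma card_insert_biUnion {r u : V} (t : Finset V) (ht : ∀ c ∈ t, IsChild hG r u c) :
    (insert u (t.biUnion (Dfin hG r))).card = 1 + ∑ c ∈ t, (Dfin hG r c).card := by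
  classical
  rw [Finset.card_insert_of_notMem, Finset.card_biUnion, add_comm]
  · intro c1 h1 c2 h2 hne
    exact IsChild.disjoint hG (ht c1 h1) (ht c2 h2) hne
  · simp only [Finset.mem_biUnion, not_exists]
    intro c hc
    exact IsChild.not_mem_Dfin hG (ht c hc.1) hc.2

lemma Dfin_eq_insert_biUnion (r u : V) :
    Dfin hG r u = insert u ((childFin hG r u).biUnion (Dfin hG r)) := by
  classical
  ext w
  simp only [Finset.mem_insert, Finset.mem_biUnion, mem_childFin]
  constructor
  · intro hw
    by_cases hne : w = u
    · exact Or.inl hne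
    · obtain ⟨c, hc, hwc⟩ := exists_child hG hw hne
      exact Or.inr ⟨c, hc, hwc⟩
  · rintro (rfl | ⟨c, hc, hwc⟩)
    · exact self_mem_Dfin hG r w
    · exact IsChild.Dfin_subset hG hc hwc

lemma Dfin_card (r u : V) :
    (Dfin hG r u).card = 1 + ∑ c ∈ childFin hG r u, (Dfin hG r c).card := by
  rw [Dfin_eq_insert_biUnion hG r u,
    card_insert_biUnion hG _ (fun c hc => (mem_childFin hG).mp hc)]

end Fin

section Greedy

/-- greedy subset selection for sums of bounded terms. -/
lemma greedy {α : Type*} [DecidableEq α] (B : ℕ) (f : α → ℕ) :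
    ∀ (s : Finset α), (∀ c ∈ s, f c ≤ B) → ∀ A, A ≤ ∑ c ∈ s, f c →
    ∃ t ⊆ s, A ≤ ∑ c ∈ t, f c ∧ ∑ c ∈ t, f c ≤ A + B := by
  intro s
  induction s using Finset.strongInductionOn with
  | _ s ih =>
    intro hb A hA
    by_cases hle : ∑ c ∈ s, f c ≤ A + B
    · exact ⟨s, le_refl s, hA, hle⟩
    · have hne : s.Nonempty := by
        rcases s.eq_empty_or_nonempty with rfl | h
        · simp at hle
        · exact h
      obtain ⟨c, hc⟩ := hne
      have hsum := Finset.sum_erase_add s f hc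
      have hfc := hb c hc
      have hnew : A ≤ ∑ x ∈ s.erase c, f x := by omega
      obtain ⟨t, hts, h1, h2⟩ := ih (s.erase c) (Finset.erase_ssubset hc)
        (fun x hx => hb x (Finset.mem_of_mem_erase hx)) A hnew
      exact ⟨t, hts.trans (Finset.erase_subset _ _), h1, h2⟩

end Greedy

section Assemble

variable [Fintype V]

/-- transfer a walk with support in `A` to reachability in the induced subgraph. -/
lemma reach_of_walk (A : Set V) : ∀ {a b : V} (w : G.Walk a b)
    (hw : ∀ z ∈ w.support, z ∈ A),
    ((⊤ : G.Subgraph).induce A).coe.Reachable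
      ⟨a, hw a w.start_mem_support⟩ ⟨b, hw b w.end_mem_support⟩ := by
  intro a b w
  induction w with
  | nil => intro hw; rfl
  | cons h q ih =>
    rename_i x y z
    intro hw
    have hx : x ∈ A := hw x (Walk.start_mem_support _)
    have hy : y ∈ A := by
      apply hw; rw [Walk.support_cons]; exact List.mem_cons_of_mem _ (Walk.start_mem_support _)
    have hq : ∀ z' ∈ q.support, z' ∈ A := fun z' hz' => by
      apply hw; rw [Walk.support_cons]; exact List.mem_cons_of_mem _ hz'
    have hadj : ((⊤ : G.Subgraph).induce A).coe.Adj ⟨x, hx⟩ ⟨y, hy⟩ := by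
      simp only [Subgraph.coe_adj, Subgraph.induce_adj, Subgraph.top_adj]
      exact ⟨hx, hy, h⟩
    exact hadj.reachable.trans (ih hq)

lemma coe_acyclic (H : G.Subgraph) (hA : G.IsAcyclic) : H.coe.IsAcyclic := by
  intro v c hc
  exact hA (c.map H.hom) (hc.map Subgraph.hom_injective)

end Assemble

end Stmt0Aux

open Stmt0Aux in
/-- Any tree on `n` vertices, with `1 ≤ m ≤ n/3`, contains two edge-disjoint subtrees
`T₁, T₂` whose edges together are all edges of `T`, with `m ≤ |T₂| ≤ 3m`. -/
theorem stmt0 {V : Type*} [Fintype V] (n m : ℕ) (hm : 1 ≤ m) (hmn : 3 * m ≤ n)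
    (G : SimpleGraph V) (hG : G.IsTree) (hcard : Fintype.card V = n) :
    ∃ T1 T2 : G.Subgraph, T1.coe.IsTree ∧ T2.coe.IsTree ∧
      Disjoint T1.edgeSet T2.edgeSet ∧
      T1.edgeSet ∪ T2.edgeSet = G.edgeSet ∧
      m ≤ T2.verts.ncard ∧ T2.verts.ncard ≤ 3 * m := by
  classical
  have hcardV : 3 * m ≤ Fintype.card V := hcard ▸ hmn
  have hV : Nonempty V := Fintype.card_pos_iff.mp (by omega)
  obtain ⟨r⟩ := hV
  set F : Finset V := Finset.univ.filter (fun v => m ≤ (Dfin hG r v).card) with hF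
  have hrF : r ∈ F := by
    simp only [hF, Finset.mem_filter, Finset.mem_univ, true_and]
    rw [Dfin_root hG r, Finset.card_univ]
    omega
  obtain ⟨u, huF, hmax⟩ := F.exists_max_image (fun v => (tp hG r v).length) ⟨r, hrF⟩
  have hucard : m ≤ (Dfin hG r u).card := by
    simpa only [hF, Finset.mem_filter, Finset.mem_univ, true_and] using huF
  have hchild : ∀ c ∈ childFin hG r u, (Dfin hG r c).card ≤ m - 1 := by
    intro c hc
    have hcc := (mem_childFin hG).mp hc
    by_contra hlt
    push_neg at hlt
    have hcF : c ∈ F := by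
      simp only [hF, Finset.mem_filter, Finset.mem_univ, true_and]; omega
    have hle := hmax c hcF
    rw [IsChild.length hG hcc] at hle
    omega
  have hsum : m - 1 ≤ ∑ c ∈ childFin hG r u, (Dfin hG r c).card := by
    have := Dfin_card hG r u
    omega
  obtain ⟨t, hts, ht1, ht2⟩ := greedy (m - 1) _ (childFin hG r u) hchild (m - 1) hsum
  have htchild : ∀ c ∈ t, IsChild hG r u c := fun c hc =>
    (mem_childFin hG).mp (hts hc)
  set S : Finset V := insert u (t.biUnion (Dfin hG r)) with hS
  have hScard : S.card = 1 + ∑ c ∈ t, (Dfin hG r c).card :=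
    card_insert_biUnion hG t htchild
  have hS1 : m ≤ S.card := by omega
  have hS2 : S.card ≤ 3 * m := by omega
  have huS : u ∈ S := Finset.mem_insert_self _ _
  have hDsub : ∀ c ∈ t, ∀ w ∈ Dfin hG r c, w ∈ S := fun c hc w hw =>
    Finset.mem_insert_of_mem (Finset.mem_biUnion.mpr ⟨c, hc, hw⟩)
  have hSmem : ∀ x ∈ S, x = u ∨ ∃ c ∈ t, x ∈ Dfin hG r c := by
    intro x hx
    rcases Finset.mem_insert.mp hx with rfl | hx
    · exact Or.inl rfl
    · obtain ⟨c, hc, hxc⟩ := Finset.mem_biUnion.mp hx; exact Or.inr ⟨c, hc, hxc⟩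
  have P1 : ∀ x y : V, G.Adj x y → x ∈ S → y ∉ S → x = u := by
    intro x y hadj hx hy
    rcases hSmem x hx with rfl | ⟨c, hc, hxc⟩
    · rfl
    · have hyD : y ∉ Dfin hG r c := fun h => hy (hDsub c hc y h)
      have hb := boundary hG (htchild c hc) hxc hyD hadj
      exact (hy (by rw [hb.2]; exact huS)).elim
  -- support of paths from u to vertices in S stays in S
  have key2 : ∀ x ∈ S, ∀ z ∈ (tp hG u x).support, z ∈ S := by
    intro x hx z hz
    by_contra hzS
    have hzu : z ≠ u := fun h => hzS (h ▸ huS)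
    rcases hSmem x hx with hxu | ⟨c, hc, hxc⟩
    · subst hxu
      have hnil : tp hG x x = Walk.nil := (tp_eq hG Walk.IsPath.nil).symm
      rw [hnil] at hz
      exact hzu (Walk.mem_support_nil_iff.mp hz)
    · have hzD : z ∉ Dfin hG r c := fun h => hzS (hDsub c hc z h)
      have humem : u ∈ ((tp hG u x).dropUntil z hz).support := by
        have hcross := mem_support_of_cross hG (htchild c hc)
          (((tp hG u x).dropUntil z hz).reverse) hxc hzD
        rwa [Walk.support_reverse, List.mem_reverse] at hcross
      exact hzu (eq_of_mem_take_drop (tp_isPath hG u x) hz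
        (Walk.start_mem_support _) humem).symm
  set A' : Set V := (↑S : Set V)ᶜ ∪ {u} with hA'
  have huA' : u ∈ A' := Or.inr rfl
  have key1 : ∀ y, y ∈ A' → ∀ z ∈ (tp hG u y).support, z ∈ A' := by
    intro y hy z hz
    by_contra hzA
    have hzS : z ∈ S := by
      by_contra h
      exact hzA (Or.inl (by simpa using h))
    have hzu : z ≠ u := fun h => hzA (h ▸ huA')
    rcases hSmem z hzS with rfl | ⟨c, hc, hzc⟩
    · exact hzu rfl
    · have hyD : y ∉ Dfin hG r c := by
        rcases hy with hy | hy
        · exact fun h => hy (by simpa using hDsub c hc y h)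
        · rw [Set.mem_singleton_iff] at hy
          subst hy
          exact IsChild.not_mem_Dfin hG (htchild c hc)
      have humem : u ∈ ((tp hG u y).dropUntil z hz).support :=
        mem_support_of_cross hG (htchild c hc) ((tp hG u y).dropUntil z hz) hzc hyD
      exact hzu (eq_of_mem_take_drop (tp_isPath hG u y) hz
        (Walk.start_mem_support _) humem).symm
  refine ⟨(⊤ : G.Subgraph).induce A', (⊤ : G.Subgraph).induce (↑S : Set V), ?_, ?_, ?_, ?_, ?_, ?_⟩
  · -- T1 is a tree
    constructor
    · rw [SimpleGraph.connected_iff]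
      refine ⟨?_, ⟨⟨u, huA'⟩⟩⟩
      rintro ⟨x, hx⟩ ⟨y, hy⟩
      have r1 := reach_of_walk A' (tp hG u x) (key1 x hx)
      have r2 := reach_of_walk A' (tp hG u y) (key1 y hy)
      exact r1.symm.trans r2
    · exact coe_acyclic _ hG.IsAcyclic
  · -- T2 is a tree
    constructor
    · rw [SimpleGraph.connected_iff]
      refine ⟨?_, ⟨⟨u, Finset.mem_coe.mpr huS⟩⟩⟩
      rintro ⟨x, hx⟩ ⟨y, hy⟩
      have r1 := reach_of_walk (↑S : Set V) (tp hG u x)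
        (fun z hz => key2 x (Finset.mem_coe.mp hx) z hz)
      have r2 := reach_of_walk (↑S : Set V) (tp hG u y)
        (fun z hz => key2 y (Finset.mem_coe.mp hy) z hz)
      exact r1.symm.trans r2
    · exact coe_acyclic _ hG.IsAcyclic
  · -- disjoint edge sets
    rw [Set.disjoint_left]
    intro e he1 he2
    induction e using Sym2.ind with
    | _ a b =>
      rw [Subgraph.mem_edgeSet, Subgraph.induce_adj] at he1 he2
      obtain ⟨ha1, hb1, hadj⟩ := he1
      obtain ⟨ha2, hb2, -⟩ := he2
      have hau : a = u := by
        rcases ha1 with h | h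
        · exact absurd ha2 (by simpa using h)
        · simpa using h
      have hbu : b = u := by
        rcases hb1 with h | h
        · exact absurd hb2 (by simpa using h)
        · simpa using h
      rw [Subgraph.top_adj] at hadj
      rw [hau, hbu] at hadj
      exact G.loopless.irrefl u hadj
  · -- union of edge sets
    ext e
    induction e using Sym2.ind with
    | _ a b =>
      simp only [Set.mem_union, Subgraph.mem_edgeSet, Subgraph.induce_adj, Subgraph.top_adj,
        SimpleGraph.mem_edgeSet]
      constructor
      · rintro (⟨-, -, h⟩ | ⟨-, -, h⟩) <;> exact h
      · intro h
        by_cases haS : a ∈ S <;> by_cases hbS : b ∈ S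
        · exact Or.inr ⟨Finset.mem_coe.mpr haS, Finset.mem_coe.mpr hbS, h⟩
        · have := P1 a b h haS hbS
          exact Or.inl ⟨Or.inr (by simp [this]), Or.inl (by simpa using hbS), h⟩
        · have := P1 b a h.symm hbS haS
          exact Or.inl ⟨Or.inl (by simpa using haS), Or.inr (by simp [this]), h⟩
        · exact Or.inl ⟨Or.inl (by simpa using haS), Or.inl (by simpa using hbS), h⟩
  · -- m ≤ |T2|
    show m ≤ ((↑S : Set V)).ncard
    rw [Set.ncard_coe_finset]
    exact hS1
  · show ((↑S : Set V)).ncard ≤ 3 * m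
    rw [Set.ncard_coe_finset]
    exact hS2
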